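/- For fixed d ≥ 2, the number of 2-alternating guillotine partitions of a d-box by n cuts is d·(d−1)^(n−1)·C_n for n ≥ 1, where C_n is the n-th Catalan number. Equivalently: the number of binary trees with n vertices colored by {1,...,d} in which no child (left or right) has the same color as its parent equals d·(d−1)^(n−1)·C_n. -/

import Mathlib

/-- Binary trees whose vertices are colored by `Fin d`. -/
inductive CTree (d : ℕ) : Type
  | nil : CTree d
  | node (c : Fin d) (l r : CTree d) : CTree d

namespace CTree

/-- The number of vertices of a colored binary tree. -/
def size {d : ℕ} : CTree d → ℕ
  | nil => 0
  | node _ l r => 1 + size l + size r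

/-- The color of the root, if any. -/
def rootColor {d : ℕ} : CTree d → Option (Fin d)
  | nil => none
  | node c _ _ => some c

/-- No child (left or right) has the same color as its parent. -/
def ProperColored {d : ℕ} : CTree d → Prop
  | nil => True
  | node c l r => rootColor l ≠ some c ∧ rootColor r ≠ some c ∧
      ProperColored l ∧ ProperColored r

end CTree

deriving instance DecidableEq for CTree

open Finset

def TS (d : ℕ) : ℕ → Option (Fin d) → Finset (CTree d)
  | 0, _ => {CTree.nil}
  | (m+1), o =>
      (Finset.univ.filter (fun c' : Fin d => some c' ≠ o)).biUnion fun c' =>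
        (Finset.range (m+1)).attach.biUnion fun a =>
          ((TS d a.1 (some c')) ×ˢ (TS d (m - a.1) (some c'))).image
            fun lr => CTree.node c' lr.1 lr.2
  termination_by n _ => n
  decreasing_by
  · exact Finset.mem_range.mp a.2
  · exact Nat.lt_succ_of_le (Nat.sub_le _ _)

lemma mem_TS {d : ℕ} : ∀ (n : ℕ) (o : Option (Fin d)) (t : CTree d),
    t ∈ TS d n o ↔ t.size = n ∧ t.ProperColored ∧ ∀ c : Fin d, o = some c → t.rootColor ≠ some c := by
  intro n
  induction n using Nat.strong_induction_on with
  | _ n ih =>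
    intro o t
    cases n with
    | zero =>
      cases t with
      | nil => simp [TS, CTree.size, CTree.ProperColored, CTree.rootColor]
      | node c' l r => simp [TS, CTree.size]
    | succ m =>
      cases t with
      | nil => simp [TS, CTree.size]
      | node c' l r =>
        simp only [TS, Finset.mem_biUnion, Finset.mem_filter, Finset.mem_univ, true_and,
          Finset.mem_attach, Finset.mem_image, Finset.mem_product, CTree.size,
          CTree.ProperColored, CTree.rootColor]
        constructor
        · rintro ⟨c'', hc'', ⟨a, ha⟩, ⟨l', r'⟩, ⟨hl, hr⟩, heq⟩
          cases heq
          have ha' := Finset.mem_range.mp ha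
          dsimp only at hl hr
          obtain ⟨hsl, hpl, hrl⟩ := (ih a (by omega) _ l').mp hl
          obtain ⟨hsr, hpr, hrr⟩ := (ih (m - a) (Nat.lt_succ_of_le (Nat.sub_le _ _)) _ r').mp hr
          refine ⟨by show 1 + l'.size + r'.size = m + 1; omega, ⟨hrl _ rfl, hrr _ rfl, hpl, hpr⟩, fun c ho => ho ▸ hc''⟩
        · rintro ⟨hsz, ⟨hrl, hrr, hpl, hpr⟩, hh⟩
          have hne' : some c' ≠ o := fun h => hh c' h.symm rfl
          refine ⟨c', hne', ⟨⟨l.size, Finset.mem_range.mpr (by omega)⟩, (l, r), ⟨?_, ?_⟩, rfl⟩⟩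
          · exact (ih l.size (by omega) _ l).mpr ⟨rfl, hpl, fun c hc => by cases hc; exact hrl⟩
          · exact (ih (m - l.size) (by omega) _ r).mpr ⟨by omega, hpr, fun c hc => by cases hc; exact hrr⟩

lemma node_inj {d : ℕ} (c' : Fin d) :
    Function.Injective (fun lr : CTree d × CTree d => CTree.node c' lr.1 lr.2) := by
  rintro ⟨l1, r1⟩ ⟨l2, r2⟩ h
  cases h
  rfl

lemma sum_catalan (d m : ℕ) :
    ∑ a ∈ Finset.range (m + 1),
        ((d - 1) ^ a * catalan a) * ((d - 1) ^ (m - a) * catalan (m - a))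
      = (d - 1) ^ m * catalan (m + 1) := by
  rw [catalan_succ, ← Finset.sum_range (fun i => catalan i * catalan (m - i)), Finset.mul_sum]
  apply Finset.sum_congr rfl
  intro a ha
  have h : a ≤ m := by simpa [Nat.lt_succ_iff] using ha
  calc ((d - 1) ^ a * catalan a) * ((d - 1) ^ (m - a) * catalan (m - a))
      = ((d - 1) ^ a * (d - 1) ^ (m - a)) * (catalan a * catalan (m - a)) := by ring
    _ = (d - 1) ^ m * (catalan a * catalan (m - a)) := by
        rw [← pow_add, Nat.add_sub_cancel' h]

lemma card_TS_succ {d : ℕ} (m : ℕ) (o : Option (Fin d))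
    (ihs : ∀ k, k ≤ m → ∀ c : Fin d, (TS d k (some c)).card = (d - 1) ^ k * catalan k) :
    (TS d (m + 1) o).card =
      (Finset.univ.filter (fun c' : Fin d => some c' ≠ o)).card
        * ((d - 1) ^ m * catalan (m + 1)) := by
  have hroot : ∀ (c' : Fin d) (t : CTree d),
      t ∈ ((Finset.range (m + 1)).attach.biUnion fun a =>
        ((TS d a.1 (some c')) ×ˢ (TS d (m - a.1) (some c'))).image
          fun lr => CTree.node c' lr.1 lr.2) → t.rootColor = some c' := by
    intro c' t ht
    simp only [Finset.mem_biUnion, Finset.mem_image] at ht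
    obtain ⟨a, _, lr, _, rfl⟩ := ht
    rfl
  rw [TS]
  rw [Finset.card_biUnion]
  · have inner : ∀ c' : Fin d,
        ((Finset.range (m + 1)).attach.biUnion fun a =>
          ((TS d a.1 (some c')) ×ˢ (TS d (m - a.1) (some c'))).image
            fun lr => CTree.node c' lr.1 lr.2).card = (d - 1) ^ m * catalan (m + 1) := by
      intro c'
      rw [Finset.card_biUnion]
      · calc ∑ a ∈ (Finset.range (m + 1)).attach,
              (((TS d a.1 (some c')) ×ˢ (TS d (m - a.1) (some c'))).image
                fun lr => CTree.node c' lr.1 lr.2).card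
            = ∑ a ∈ (Finset.range (m + 1)).attach,
              ((d - 1) ^ a.1 * catalan a.1) * ((d - 1) ^ (m - a.1) * catalan (m - a.1)) := by
              apply Finset.sum_congr rfl
              intro a _
              have ha : a.1 ≤ m := by
                have := Finset.mem_range.mp a.2; omega
              rw [Finset.card_image_of_injective _ (node_inj c'), Finset.card_product,
                ihs a.1 ha c', ihs (m - a.1) (by omega) c']
          _ = ∑ a ∈ Finset.range (m + 1),
              ((d - 1) ^ a * catalan a) * ((d - 1) ^ (m - a) * catalan (m - a)) :=
              Finset.sum_attach (Finset.range (m + 1))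
                (fun a => ((d - 1) ^ a * catalan a) * ((d - 1) ^ (m - a) * catalan (m - a)))
          _ = (d - 1) ^ m * catalan (m + 1) := sum_catalan d m
      · -- disjointness over sizes
        intro a _ b _ hab
        rw [Function.onFun, Finset.disjoint_left]
        intro t hta htb
        simp only [Finset.mem_image, Finset.mem_product] at hta htb
        obtain ⟨⟨l1, r1⟩, ⟨hl1, _⟩, rfl⟩ := hta
        obtain ⟨⟨l2, r2⟩, ⟨hl2, _⟩, heq⟩ := htb
        cases heq
        have h1 := ((mem_TS _ _ _).mp hl1).1
        have h2 := ((mem_TS _ _ _).mp hl2).1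
        exact hab (Subtype.ext (by dsimp only at h1 h2; omega))
    rw [Finset.sum_congr rfl fun c' _ => inner c', Finset.sum_const, smul_eq_mul]
  · intro c1 _ c2 _ h12
    rw [Function.onFun, Finset.disjoint_left]
    intro t ht1 ht2
    have e1 := hroot c1 t ht1
    have e2 := hroot c2 t ht2
    exact h12 (Option.some_injective _ (e1.symm.trans e2))

lemma card_TS_some {d : ℕ} : ∀ (n : ℕ) (c : Fin d),
    (TS d n (some c)).card = (d - 1) ^ n * catalan n := by
  intro n
  induction n using Nat.strong_induction_on with
  | _ n ih =>
    intro c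
    cases n with
    | zero => simp [TS]
    | succ m =>
      rw [card_TS_succ m (some c) (fun k hk => ih k (by omega))]
      have hfil : (Finset.univ.filter fun c' : Fin d => some c' ≠ some c)
          = Finset.univ.erase c := by
        ext x; simp [Finset.mem_erase]
      rw [hfil, Finset.card_erase_of_mem (Finset.mem_univ c), Finset.card_univ,
        Fintype.card_fin, pow_succ, ← mul_assoc, mul_comm ((d-1)^m) (d-1)]



/-- The number of 2-alternating guillotine partitions of a d-box by `n ≥ 1`
cuts — equivalently, the number of binary trees with `n` vertices colored by
`d` colors in which no child has the same color as its parent — is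
`d·(d−1)^(n−1)·Cₙ`. -/
theorem card_alternating_trees (d n : ℕ) (hd : 2 ≤ d) (hn : 1 ≤ n) :
    Nat.card {t : CTree d // t.size = n ∧ t.ProperColored} =
      d * (d - 1) ^ (n - 1) * catalan n := by
  obtain ⟨m, rfl⟩ : ∃ m, n = m + 1 := ⟨n - 1, by omega⟩
  have e : {t : CTree d // t.size = m + 1 ∧ t.ProperColored}
      ≃ {t : CTree d // t ∈ TS d (m + 1) none} :=
    Equiv.subtypeEquivRight (fun t => by rw [mem_TS]; simp)
  rw [Nat.card_congr e, Nat.card_eq_fintype_card, Fintype.card_coe,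
    card_TS_succ m none (fun k hk c => card_TS_some k c)]
  have hfil : (Finset.univ.filter fun c' : Fin d => some c' ≠ (none : Option (Fin d)))
      = Finset.univ := by ext x; simp
  rw [hfil, Finset.card_univ, Fintype.card_fin, Nat.add_sub_cancel, mul_assoc]
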